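/- For positive reals a, b with a ≠ b, the logarithmic mean L(a,b) is at most the average of the arithmetic and geometric means: L(a,b) ≤ (A(a,b) + G(a,b))/2, with equality only when a = b. -/

import Mathlib

private lemma log_gt_aux (t : ℝ) (ht : 1 < t) : 2*(t-1)/(t+1) < Real.log t := by
  -- g x = log x + 4/(x+1) is strictly increasing on [1, ∞)
  set g : ℝ → ℝ := fun x => Real.log x + 4 * (x + 1)⁻¹ with hg
  have hderiv : ∀ x : ℝ, 0 < x → HasDerivAt g (1/x - 4/(x+1)^2) x := by
    intro x hx
    have h1 : HasDerivAt (fun y : ℝ => y + 1) 1 x := (hasDerivAt_id x).add_const 1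
    have hne : x + 1 ≠ 0 := by linarith
    have h2 : HasDerivAt (fun y : ℝ => (y + 1)⁻¹) (-1 / (x+1)^2) x := h1.inv hne
    have h3 : HasDerivAt (fun y : ℝ => 4 * (y + 1)⁻¹) (4 * (-1 / (x+1)^2)) x :=
      h2.const_mul 4
    have h4 : HasDerivAt Real.log (1/x) x := by
      simpa [one_div] using Real.hasDerivAt_log (ne_of_gt hx)
    have := h4.add h3
    have e : (1/x - 4/(x+1)^2) = 1/x + 4*(-1/(x+1)^2) := by ring
    rw [e]; exact this
  have hmono : StrictMonoOn g (Set.Ici (1:ℝ)) := by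
    apply strictMonoOn_of_deriv_pos (convex_Ici 1)
    · apply ContinuousOn.add
      · exact Real.continuousOn_log.mono (by intro x hx; simp at hx ⊢; linarith)
      · apply ContinuousOn.mul continuousOn_const
        apply ContinuousOn.inv₀ (by fun_prop)
        intro x hx; simp at hx; intro h; linarith
    · intro x hx
      rw [interior_Ici] at hx
      have hx1 : (1:ℝ) < x := hx
      have hx0 : (0:ℝ) < x := by linarith
      rw [(hderiv x hx0).deriv]
      have : (x+1)^2 > 4*x := by nlinarith
      have hxp : (0:ℝ) < (x+1)^2 := by positivity
      rw [sub_pos, div_lt_div_iff₀ hxp hx0]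
      nlinarith
  have h1 : g 1 < g t := hmono (Set.self_mem_Ici) (Set.mem_Ici.mpr (le_of_lt ht)) ht
  have hg1 : g 1 = 2 := by norm_num [hg]
  have ht1 : (0:ℝ) < t + 1 := by linarith
  rw [hg1] at h1
  rw [div_lt_iff₀ ht1]
  simp only [hg] at h1
  have h4 : 4 * (t+1)⁻¹ * (t+1) = 4 := by field_simp
  nlinarith [h1, h4, mul_pos ht1 ht1]

private lemma key_strict (a b : ℝ) (ha : 0 < a) (hlt : a < b) :
    (b - a) / (Real.log b - Real.log a) < ((a + b) / 2 + Real.sqrt (a * b)) / 2 := by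
  have hb : 0 < b := lt_trans ha hlt
  set s := Real.sqrt a with hs
  set r := Real.sqrt b with hr
  have hs0 : 0 < s := Real.sqrt_pos.mpr ha
  have hr0 : 0 < r := Real.sqrt_pos.mpr hb
  have hsr : s < r := Real.sqrt_lt_sqrt (le_of_lt ha) hlt
  have has : a = s^2 := (Real.sq_sqrt (le_of_lt ha)).symm
  have hbr : b = r^2 := (Real.sq_sqrt (le_of_lt hb)).symm
  have hab : Real.sqrt (a * b) = s * r := by
    rw [Real.sqrt_mul (le_of_lt ha)]
  have hlog : Real.log b - Real.log a = 2 * (Real.log r - Real.log s) := by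
    rw [has, hbr, Real.log_pow, Real.log_pow]; push_cast; ring
  have ht : 1 < r / s := (one_lt_div hs0).mpr hsr
  have hkey := log_gt_aux (r/s) ht
  have hlogrs : Real.log (r/s) = Real.log r - Real.log s :=
    Real.log_div (ne_of_gt hr0) (ne_of_gt hs0)
  rw [hlogrs] at hkey
  -- rewrite 2*(r/s - 1)/(r/s + 1) = 2*(r-s)/(r+s)
  have heq : 2*(r/s - 1)/(r/s + 1) = 2*(r - s)/(r + s) := by
    rw [div_eq_div_iff (by positivity) (by positivity)]
    field_simp
  rw [heq] at hkey
  have hd : 0 < Real.log r - Real.log s := by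
    have := Real.log_lt_log hs0 hsr
    linarith
  have hrs : 0 < r + s := by linarith
  have hkey' : 2*(r - s) < (Real.log r - Real.log s) * (r + s) := by
    rw [div_lt_iff₀ hrs] at hkey
    linarith
  rw [hab, hlog, has, hbr]
  rw [div_lt_iff₀ (by linarith)]
  nlinarith [mul_pos hrs hrs, hkey', hd, mul_pos hd hrs]

theorem logarithmic_le_avg_arith_geom (a b : ℝ) (ha : 0 < a) (hb : 0 < b) (hab : a ≠ b) :
    (b - a) / (Real.log b - Real.log a) ≤ ((a + b) / 2 + Real.sqrt (a * b)) / 2 ∧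
      ((b - a) / (Real.log b - Real.log a) = ((a + b) / 2 + Real.sqrt (a * b)) / 2 → a = b) := by
  have hstrict : (b - a) / (Real.log b - Real.log a) < ((a + b) / 2 + Real.sqrt (a * b)) / 2 := by
    rcases lt_or_gt_of_ne hab with h | h
    · exact key_strict a b ha h
    · have := key_strict b a hb h
      have hflip : (b - a) / (Real.log b - Real.log a) = (a - b) / (Real.log a - Real.log b) := by
        rw [← neg_sub a b, ← neg_sub (Real.log a) (Real.log b), neg_div_neg_eq]
      rw [hflip, add_comm a b, mul_comm a b]
      exact this
  exact ⟨le_of_lt hstrict, fun heq => absurd heq (ne_of_lt hstrict)⟩
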